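/- Let V ⊆ L(ℍ, ℍ) ≅ L(ℝ⁴, ℝ⁴) be the space of right multiplications by quaternions, V = {x ↦ x·a : a ∈ ℍ}. Then M_2(V) = 0: any symmetric bilinear map B : ℍ × ℍ → ℍ such that for each x the map y ↦ B(x,y) is right multiplication by some quaternion must vanish. -/

import Mathlib

open scoped Quaternion

/-- `M₂` of the space of right quaternion multiplications vanishes: a symmetric
real-bilinear map `B : ℍ × ℍ → ℍ` such that each `B(x,·)` is right multiplication
by a quaternion is identically zero. -/
theorem M2_right_mul_quaternion_eq_zero
    (B : ℍ[ℝ] →ₗ[ℝ] ℍ[ℝ] →ₗ[ℝ] ℍ[ℝ])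
    (hsym : ∀ x y, B x y = B y x)
    (h : ∀ x : ℍ[ℝ], ∃ a : ℍ[ℝ], ∀ y, B x y = y * a) :
    B = 0 := by
  obtain ⟨a, ha⟩ := h 1
  -- B x y = y * x * a for all x, y
  have key : ∀ x y : ℍ[ℝ], B x y = y * (x * a) := by
    intro x y
    obtain ⟨c, hc⟩ := h x
    have hc1 : c = x * a := by
      have := hc 1
      rw [one_mul] at this
      rw [← this, hsym, ha]
    rw [hc y, hc1]
  -- symmetry forces y * x * a = x * y * a
  have comm : ∀ x y : ℍ[ℝ], y * (x * a) = x * (y * a) := by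
    intro x y
    rw [← key, hsym, key]
  set i : ℍ[ℝ] := ⟨0,1,0,0⟩
  set j : ℍ[ℝ] := ⟨0,0,1,0⟩
  have hij := comm i j
  have ha0 : a = 0 := by
    have h2 : (j * i - i * j) * a = 0 := by
      rw [sub_mul, mul_assoc, mul_assoc, hij, sub_self]
    have hk : j * i - i * j = ⟨0,0,0,-2⟩ := by
      apply Quaternion.ext <;>
      simp only [Quaternion.ext_iff, Quaternion.re_sub, Quaternion.imI_sub,
        Quaternion.imJ_sub, Quaternion.imK_sub, Quaternion.re_mul, Quaternion.imI_mul,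
        Quaternion.imJ_mul, Quaternion.imK_mul] <;>
      simp only [i, j] <;>
      norm_num
    rw [hk] at h2
    rcases mul_eq_zero.mp h2 with h3 | h3
    · exfalso
      replace h3 := congrArg QuaternionAlgebra.imK h3
      simp at h3
    · exact h3
  refine LinearMap.ext fun x => LinearMap.ext fun y => ?_
  simp [key, ha0]
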